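/- Let $W\in L^\infty(\mathbb R^d)$, $\beta,\kappa>0$ with $\kappa\beta\|W\|_{L^\infty}<1$, and let $A:\mathbb R^d\to\mathbb R$ be such that $e^{-\beta(\frac12|v|^2+A(x))}$ is integrable on $\mathbb R^d\times\mathbb R^d$. Then the fixed-point Gibbs equation $M = Z[M]^{-1} e^{-\beta H[M]}$, with $H[M](x,v)=\frac12|v|^2+A(x)+\kappa W*\rho_M(x)$ where $\rho_M(x)=\int M(x,v)\,dv$ and $Z[M]$ the normalization making $M$ a probability density, has at most one solution in the class of probability densities on $\mathbb R^d\times\mathbb R^d$. -/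

import Mathlib

open MeasureTheory

lemma lemB (m : ℝ) (hm : 0 ≤ m) : 2 * (Real.exp m - 1) ≤ m * (Real.exp m + 1) := by
  have key : MonotoneOn (fun x : ℝ => x * (Real.exp x + 1) - 2 * (Real.exp x - 1)) (Set.Ici 0) := by
    apply monotoneOn_of_deriv_nonneg (convex_Ici 0)
    · fun_prop
    · intro x hx
      exact (((differentiable_id.mul ((Real.differentiable_exp).add_const 1)).sub
        (((Real.differentiable_exp).sub_const 1).const_mul 2)) x).differentiableWithinAt
    · intro x hx
      have hd : HasDerivAt (fun x : ℝ => x * (Real.exp x + 1) - 2 * (Real.exp x - 1))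
          ((1 * (Real.exp x + 1) + x * Real.exp x) - 2 * Real.exp x) x := by
        exact (((hasDerivAt_id x).mul ((Real.hasDerivAt_exp x).add_const 1)).sub
          (((Real.hasDerivAt_exp x).sub_const 1).const_mul 2))
      rw [hd.deriv]
      have h1 : Real.exp (-x) * Real.exp x = 1 := by rw [← Real.exp_add]; simp
      nlinarith [mul_le_mul_of_nonneg_right (Real.add_one_le_exp (-x)) (Real.exp_pos x).le, h1]
  have h0 := key (Set.self_mem_Ici) (Set.mem_Ici.mpr hm) hm
  simp at h0
  linarith

lemma lemA (a b : ℝ) (ha : 0 ≤ a) (hb : 0 ≤ b) :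
    4 * ((Real.exp a - 1) * (Real.exp b - 1)) ≤ (a + b) * (Real.exp (a + b) - 1) := by
  set x := Real.exp (a/2) with hx
  set y := Real.exp (b/2) with hy
  have hxpos : 0 < x := Real.exp_pos _
  have hypos : 0 < y := Real.exp_pos _
  have hx1 : 1 ≤ x := Real.one_le_exp (by linarith)
  have hy1 : 1 ≤ y := Real.one_le_exp (by linarith)
  have hea : Real.exp a = x * x := by rw [hx, ← Real.exp_add]; congr 1; ring
  have heb : Real.exp b = y * y := by rw [hy, ← Real.exp_add]; congr 1; ring
  have heab : Real.exp (a + b) = (x*y) * (x*y) := by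
    rw [hx, hy, show a + b = (a/2 + b/2) + (a/2 + b/2) by ring, Real.exp_add, Real.exp_add]
  have hm : 0 ≤ (a+b)/2 := by linarith
  have hB := lemB ((a+b)/2) hm
  have hexy : Real.exp ((a+b)/2) = x * y := by rw [hx, hy, ← Real.exp_add]; congr 1; ring
  rw [hexy] at hB
  -- hB : 2 * (x*y - 1) ≤ (a+b)/2 * (x*y + 1)
  have step1 : (Real.exp a - 1) * (Real.exp b - 1) ≤ (x*y - 1)^2 := by
    rw [hea, heb]; nlinarith [sq_nonneg (x - y)]
  have hxy1 : 0 ≤ x*y - 1 := by nlinarith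
  rw [heab]
  nlinarith [mul_le_mul_of_nonneg_left hB (by linarith : (0:ℝ) ≤ 2*(x*y-1)), step1]

lemma lemC (L U : ℝ) (hL : L ≤ 0) (hU : 0 ≤ U) :
    4 * ((Real.exp U - 1) * (1 - Real.exp L)) ≤
      (U - L) * ((Real.exp U - 1) + (1 - Real.exp L)) := by
  have hA := lemA U (-L) hU (by linarith)
  have h5 := mul_le_mul_of_nonneg_right hA (Real.exp_pos L).le
  have e1 : Real.exp (-L) * Real.exp L = 1 := by rw [← Real.exp_add]; simp
  have e2 : Real.exp (U + -L) * Real.exp L = Real.exp U := by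
    rw [← Real.exp_add]; congr 1; ring
  have id1 : 4 * ((Real.exp U - 1) * (Real.exp (-L) - 1)) * Real.exp L
      = 4 * ((Real.exp U - 1) * (1 - Real.exp L)) := by
    linear_combination (4 * (Real.exp U - 1)) * e1
  have id2 : (U + -L) * (Real.exp (U + -L) - 1) * Real.exp L
      = (U - L) * ((Real.exp U - 1) + (1 - Real.exp L)) := by
    linear_combination (U + -L) * e2
  linarith [h5, id1, id2]

set_option maxHeartbeats 1000000 in
/-- Uniqueness of the mean-field Gibbs equilibrium: if `κβ‖W‖_∞ < 1` and
`e^{-β(|v|²/2 + A(x))}` is integrable, then the fixed-point Gibbs equation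
`M = Z[M]⁻¹ e^{-β H[M]}`, `H[M](x,v) = |v|²/2 + A(x) + κ (W * ρ_M)(x)`,
has at most one solution among probability densities on `ℝ^d × ℝ^d`. -/
theorem stmt_9 (d : ℕ) (W A : EuclideanSpace ℝ (Fin d) → ℝ)
    (β κ CW : ℝ) (hβ : 0 < β) (hκ : 0 < κ)
    (hW : ∀ x, |W x| ≤ CW) (hsmall : κ * β * CW < 1)
    (hint : Integrable (fun p : EuclideanSpace ℝ (Fin d) × EuclideanSpace ℝ (Fin d) =>
      Real.exp (-β * (‖p.2‖ ^ 2 / 2 + A p.1))))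
    (M₁ M₂ : EuclideanSpace ℝ (Fin d) × EuclideanSpace ℝ (Fin d) → ℝ)
    (h₁nn : ∀ z, 0 ≤ M₁ z) (h₁int : Integrable M₁) (h₁mass : ∫ z, M₁ z = 1)
    (h₂nn : ∀ z, 0 ≤ M₂ z) (h₂int : Integrable M₂) (h₂mass : ∫ z, M₂ z = 1)
    (Z₁ Z₂ : ℝ)
    (hZ₁ : Z₁ = ∫ z : EuclideanSpace ℝ (Fin d) × EuclideanSpace ℝ (Fin d),
      Real.exp (-β * (‖z.2‖ ^ 2 / 2 + A z.1
        + κ * ∫ y : EuclideanSpace ℝ (Fin d), W (z.1 - y) * ∫ v : EuclideanSpace ℝ (Fin d), M₁ (y, v))))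
    (hZ₂ : Z₂ = ∫ z : EuclideanSpace ℝ (Fin d) × EuclideanSpace ℝ (Fin d),
      Real.exp (-β * (‖z.2‖ ^ 2 / 2 + A z.1
        + κ * ∫ y : EuclideanSpace ℝ (Fin d), W (z.1 - y) * ∫ v : EuclideanSpace ℝ (Fin d), M₂ (y, v))))
    (heq₁ : ∀ z, M₁ z = Z₁⁻¹ * Real.exp (-β * (‖z.2‖ ^ 2 / 2 + A z.1
        + κ * ∫ y : EuclideanSpace ℝ (Fin d), W (z.1 - y) * ∫ v : EuclideanSpace ℝ (Fin d), M₁ (y, v))))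
    (heq₂ : ∀ z, M₂ z = Z₂⁻¹ * Real.exp (-β * (‖z.2‖ ^ 2 / 2 + A z.1
        + κ * ∫ y : EuclideanSpace ℝ (Fin d), W (z.1 - y) * ∫ v : EuclideanSpace ℝ (Fin d), M₂ (y, v)))) :
    M₁ = M₂ := by
  classical
  have hCW : 0 ≤ CW := le_trans (abs_nonneg _) (hW 0)
  -- abbreviations for the space
  set ρ₁ : EuclideanSpace ℝ (Fin d) → ℝ := fun y => ∫ v, M₁ (y, v) with hρ₁def
  set ρ₂ : EuclideanSpace ℝ (Fin d) → ℝ := fun y => ∫ v, M₂ (y, v) with hρ₂def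
  simp only [show ∀ y : EuclideanSpace ℝ (Fin d), (∫ v, M₁ (y, v)) = ρ₁ y from fun _ => rfl,
    show ∀ y : EuclideanSpace ℝ (Fin d), (∫ v, M₂ (y, v)) = ρ₂ y from fun _ => rfl]
    at hZ₁ hZ₂ heq₁ heq₂
  set G₁ : EuclideanSpace ℝ (Fin d) → ℝ := fun x => ∫ y, W (x - y) * ρ₁ y with hG₁def
  set G₂ : EuclideanSpace ℝ (Fin d) → ℝ := fun x => ∫ y, W (x - y) * ρ₂ y with hG₂def
  simp only [show ∀ x : EuclideanSpace ℝ (Fin d), (∫ y, W (x - y) * ρ₁ y) = G₁ x from fun _ => rfl,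
    show ∀ x : EuclideanSpace ℝ (Fin d), (∫ y, W (x - y) * ρ₂ y) = G₂ x from fun _ => rfl]
    at hZ₁ hZ₂ heq₁ heq₂
  -- positivity of the normalization constants
  have hZpos : ∀ (Z : ℝ) (M : EuclideanSpace ℝ (Fin d) × EuclideanSpace ℝ (Fin d) → ℝ)
      (G : EuclideanSpace ℝ (Fin d) → ℝ), (∀ z, 0 ≤ M z) → (∫ z, M z) = 1 →
      (∀ z, M z = Z⁻¹ * Real.exp (-β * (‖z.2‖ ^ 2 / 2 + A z.1 + κ * G z.1))) → 0 < Z := by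
    intro Z M G hnn hmass heq
    rcases lt_trichotomy Z 0 with h | h | h
    · exfalso
      have h2 : Z⁻¹ < 0 := inv_lt_zero.mpr h
      have h3 := hnn (0, 0)
      rw [heq (0, 0)] at h3
      exact absurd h3 (not_le.mpr (mul_neg_of_neg_of_pos h2 (Real.exp_pos _)))
    · exfalso
      have h4 : ∀ z, M z = 0 := fun z => by rw [heq z, h]; simp
      have h5 : (∫ z, M z) = 0 := by simp only [h4]; simp
      rw [hmass] at h5; norm_num at h5
    · exact h
  have hZ₁pos : 0 < Z₁ := hZpos Z₁ M₁ G₁ h₁nn h₁mass heq₁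
  have hZ₂pos : 0 < Z₂ := hZpos Z₂ M₂ G₂ h₂nn h₂mass heq₂
  -- marginals
  rw [Measure.volume_eq_prod] at h₁int h₂int hint
  have hρ₁int : Integrable ρ₁ := h₁int.integral_prod_left
  have hρ₂int : Integrable ρ₂ := h₂int.integral_prod_left
  have hρ₁mass : (∫ x, ρ₁ x) = 1 := by
    have h' := integral_prod M₁ h₁int
    rw [← Measure.volume_eq_prod] at h'
    rw [h₁mass] at h'
    exact h'.symm
  have hρ₂mass : (∫ x, ρ₂ x) = 1 := by
    have h' := integral_prod M₂ h₂int
    rw [← Measure.volume_eq_prod] at h'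
    rw [h₂mass] at h'
    exact h'.symm
  -- the Gaussian factor
  have hvolne : (volume : Measure (EuclideanSpace ℝ (Fin d))) ≠ 0 := by
    refine Measure.measure_univ_ne_zero.mp ?_
    exact (isOpen_univ.measure_ne_zero volume Set.univ_nonempty)
  haveI : (MeasureTheory.ae (volume : Measure (EuclideanSpace ℝ (Fin d)))).NeBot :=
    ae_neBot.mpr hvolne
  obtain ⟨x₀, hx₀⟩ := hint.prod_right_ae.exists
  have hgauss : Integrable (fun v : EuclideanSpace ℝ (Fin d) =>
      Real.exp (-β * (‖v‖ ^ 2 / 2))) := by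
    have h2 := hx₀.const_mul (Real.exp (β * A x₀))
    refine h2.congr (Filter.Eventually.of_forall fun v => ?_)
    dsimp only
    rw [← Real.exp_add]; congr 1; ring
  set Iv : ℝ := ∫ v : EuclideanSpace ℝ (Fin d), Real.exp (-β * (‖v‖ ^ 2 / 2)) with hIvdef
  have hIvpos : 0 < Iv := by
    rw [hIvdef, integral_pos_iff_support_of_nonneg (fun v => (Real.exp_pos _).le) hgauss]
    have hsup : (Function.support fun v : EuclideanSpace ℝ (Fin d) =>
        Real.exp (-β * (‖v‖ ^ 2 / 2))) = Set.univ := by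
      ext v; simp [Function.support, Real.exp_ne_zero]
    rw [hsup]
    exact Measure.measure_univ_pos.mpr hvolne
  -- formula for the marginals, positivity
  have hform : ∀ (Z : ℝ) (M : EuclideanSpace ℝ (Fin d) × EuclideanSpace ℝ (Fin d) → ℝ)
      (G : EuclideanSpace ℝ (Fin d) → ℝ),
      (∀ z, M z = Z⁻¹ * Real.exp (-β * (‖z.2‖ ^ 2 / 2 + A z.1 + κ * G z.1))) →
      ∀ x, (∫ v, M (x, v)) = Z⁻¹ * Real.exp (-β * (A x + κ * G x)) * Iv := by
    intro Z M G heq x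
    have h1 : (fun v : EuclideanSpace ℝ (Fin d) => M (x, v)) =
        fun v => (Z⁻¹ * Real.exp (-β * (A x + κ * G x))) * Real.exp (-β * (‖v‖ ^ 2 / 2)) := by
      funext v
      rw [heq (x, v)]
      dsimp only
      rw [mul_assoc, ← Real.exp_add]
      congr 2
      ring
    rw [h1, integral_const_mul, ← hIvdef]
  have hρ₁form : ∀ x, ρ₁ x = Z₁⁻¹ * Real.exp (-β * (A x + κ * G₁ x)) * Iv :=
    fun x => hform Z₁ M₁ G₁ heq₁ x
  have hρ₂form : ∀ x, ρ₂ x = Z₂⁻¹ * Real.exp (-β * (A x + κ * G₂ x)) * Iv :=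
    fun x => hform Z₂ M₂ G₂ heq₂ x
  have hρ₁pos : ∀ x, 0 < ρ₁ x := fun x => by
    rw [hρ₁form x]
    exact mul_pos (mul_pos (inv_pos.mpr hZ₁pos) (Real.exp_pos _)) hIvpos
  have hρ₂pos : ∀ x, 0 < ρ₂ x := fun x => by
    rw [hρ₂form x]
    exact mul_pos (mul_pos (inv_pos.mpr hZ₂pos) (Real.exp_pos _)) hIvpos
  -- the L¹ distance of the marginals
  set s : ℝ := ∫ x, |ρ₁ x - ρ₂ x| with hsdef
  have hs0 : 0 ≤ s := integral_nonneg fun x => abs_nonneg _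
  -- bound on the difference of the interaction fields
  have hGdiff : ∀ x, |G₁ x - G₂ x| ≤ CW * s := by
    intro x
    have transfer : ∀ p q : EuclideanSpace ℝ (Fin d) → ℝ, Integrable p → Integrable q →
        (∀ y, 0 < p y) → (∀ y, 0 < q y) →
        Integrable (fun y => W (x - y) * q y) → Integrable (fun y => W (x - y) * p y) := by
      intro p q hpint hqint hp hq hqW
      have h1 : AEMeasurable (fun y => p y / q y) (volume : Measure (EuclideanSpace ℝ (Fin d))) :=
        hpint.aemeasurable.div hqint.aemeasurable
      have h2 : AEMeasurable (fun y => (p y / q y) * (W (x - y) * q y))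
          (volume : Measure (EuclideanSpace ℝ (Fin d))) := h1.mul hqW.aemeasurable
      have h3 : (fun y => (p y / q y) * (W (x - y) * q y)) = fun y => W (x - y) * p y := by
        funext y
        have hqy : q y ≠ 0 := (hq y).ne'
        field_simp
      rw [h3] at h2
      refine Integrable.mono' (hpint.const_mul CW) h2.aestronglyMeasurable
        (Filter.Eventually.of_forall fun y => ?_)
      rw [Real.norm_eq_abs, abs_mul, abs_of_pos (hp y)]
      exact mul_le_mul_of_nonneg_right (hW _) (hp y).le
    by_cases hI : Integrable (fun y => W (x - y) * ρ₂ y)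
    · have hI1 : Integrable (fun y => W (x - y) * ρ₁ y) :=
        transfer ρ₁ ρ₂ hρ₁int hρ₂int hρ₁pos hρ₂pos hI
      have hsub : G₁ x - G₂ x = ∫ y, (W (x - y) * ρ₁ y - W (x - y) * ρ₂ y) := by
        rw [integral_sub hI1 hI]
      rw [hsub, ← Real.norm_eq_abs]
      calc ‖∫ y, (W (x - y) * ρ₁ y - W (x - y) * ρ₂ y)‖
          ≤ ∫ y, CW * |ρ₁ y - ρ₂ y| := by
            refine norm_integral_le_of_norm_le ((hρ₁int.sub hρ₂int).abs.const_mul CW)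
              (Filter.Eventually.of_forall fun y => ?_)
            rw [Real.norm_eq_abs, show W (x - y) * ρ₁ y - W (x - y) * ρ₂ y
              = W (x - y) * (ρ₁ y - ρ₂ y) from by ring, abs_mul]
            exact mul_le_mul_of_nonneg_right (hW _) (abs_nonneg _)
        _ = CW * s := by rw [integral_const_mul]
    · have hI1 : ¬ Integrable (fun y => W (x - y) * ρ₁ y) := fun h =>
        hI (transfer ρ₂ ρ₁ hρ₂int hρ₁int hρ₂pos hρ₁pos h)
      have e1 : G₁ x = 0 := integral_undef hI1
      have e2 : G₂ x = 0 := integral_undef hI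
      rw [e1, e2]
      simp only [sub_zero, abs_zero]
      positivity
  -- the exponential tilt
  set r : ℝ := Z₂ / Z₁ with hrdef
  have hrpos : 0 < r := div_pos hZ₂pos hZ₁pos
  set t : EuclideanSpace ℝ (Fin d) → ℝ :=
    fun x => Real.log r - β * κ * (G₁ x - G₂ x) with htdef
  set ε : ℝ := κ * β * CW with hεdef
  have hε0 : 0 ≤ ε := by positivity
  have htlb : ∀ x, Real.log r - ε * s ≤ t x ∧ t x ≤ Real.log r + ε * s := by
    intro x
    have h1 : |β * κ * (G₁ x - G₂ x)| ≤ ε * s := by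
      rw [abs_mul, abs_of_pos (mul_pos hβ hκ)]
      calc β * κ * |G₁ x - G₂ x| ≤ β * κ * (CW * s) :=
            mul_le_mul_of_nonneg_left (hGdiff x) (by positivity)
        _ = ε * s := by rw [hεdef]; ring
    rw [abs_le] at h1
    constructor <;> [skip; skip] <;> simp only [htdef] <;> linarith [h1.1, h1.2]
  have hMrel : ∀ z, M₁ z = Real.exp (t z.1) * M₂ z := by
    intro z
    have hexp_t : Real.exp (t z.1) = r * Real.exp (-(β * κ * (G₁ z.1 - G₂ z.1))) := by
      simp only [htdef]
      rw [sub_eq_add_neg, Real.exp_add, Real.exp_log hrpos]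
    have e3 : Real.exp (-(β * κ * (G₁ z.1 - G₂ z.1))) *
        Real.exp (-β * (‖z.2‖ ^ 2 / 2 + A z.1 + κ * G₂ z.1)) =
        Real.exp (-β * (‖z.2‖ ^ 2 / 2 + A z.1 + κ * G₁ z.1)) := by
      rw [← Real.exp_add]; congr 1; ring
    rw [heq₁ z, heq₂ z, hexp_t, ← e3, hrdef]
    field_simp
  have hρrel : ∀ x, ρ₁ x = Real.exp (t x) * ρ₂ x := by
    intro x
    have h1 : (fun v => M₁ (x, v)) =
        fun v : EuclideanSpace ℝ (Fin d) => Real.exp (t x) * M₂ (x, v) :=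
      funext fun v => hMrel (x, v)
    show (∫ v, M₁ (x, v)) = _
    rw [h1, integral_const_mul]
  -- bounds on the endpoints
  set L : ℝ := Real.log r - ε * s with hLdef
  set U : ℝ := Real.log r + ε * s with hUdef
  have hexpL : Real.exp L ≤ 1 := by
    have h1 : ∀ x, Real.exp L * ρ₂ x ≤ ρ₁ x := fun x => by
      rw [hρrel x]
      exact mul_le_mul_of_nonneg_right (Real.exp_le_exp.mpr (htlb x).1) (hρ₂pos x).le
    have h2 := integral_mono (hρ₂int.const_mul (Real.exp L)) hρ₁int h1
    rwa [integral_const_mul, hρ₂mass, hρ₁mass, mul_one] at h2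
  have hexpU : 1 ≤ Real.exp U := by
    have h1 : ∀ x, ρ₁ x ≤ Real.exp U * ρ₂ x := fun x => by
      rw [hρrel x]
      exact mul_le_mul_of_nonneg_right (Real.exp_le_exp.mpr (htlb x).2) (hρ₂pos x).le
    have h2 := integral_mono hρ₁int (hρ₂int.const_mul (Real.exp U)) h1
    rwa [integral_const_mul, hρ₂mass, hρ₁mass, mul_one] at h2
  have hLle : L ≤ 0 := Real.exp_le_one_iff.mp hexpL
  have hUge : 0 ≤ U := by
    by_contra h
    push_neg at h
    have h2 : Real.exp U < Real.exp 0 := Real.exp_lt_exp.mpr h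
    rw [Real.exp_zero] at h2
    linarith
  -- the contraction estimate
  have hεs : ε * s = 0 := by
    by_cases hBC : (Real.exp U - 1) + (1 - Real.exp L) = 0
    · have h1 : Real.exp U = Real.exp L := by linarith
      have h2 : U = L := Real.exp_eq_exp.mp h1
      have h3 : U - L = 2 * (ε * s) := by rw [hUdef, hLdef]; ring
      rw [h2] at h3
      linarith
    · have hB : 0 ≤ Real.exp U - 1 := by linarith
      have hC : 0 ≤ 1 - Real.exp L := by linarith
      have hBCpos : 0 < (Real.exp U - 1) + (1 - Real.exp L) :=
        lt_of_le_of_ne (by linarith) (Ne.symm hBC)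
      have hkey : ∀ x, |ρ₁ x - ρ₂ x| ≤
          ((Real.exp U - 1) - (1 - Real.exp L)) / ((Real.exp U - 1) + (1 - Real.exp L))
            * (ρ₁ x - ρ₂ x)
          + 2 * (Real.exp U - 1) * (1 - Real.exp L) / ((Real.exp U - 1) + (1 - Real.exp L))
            * ρ₂ x := by
        intro x
        have hX1 : Real.exp (t x) - 1 ≤ Real.exp U - 1 := by
          have := Real.exp_le_exp.mpr (htlb x).2
          linarith
        have hX2 : -(1 - Real.exp L) ≤ Real.exp (t x) - 1 := by
          have := Real.exp_le_exp.mpr (htlb x).1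
          linarith
        have habs : |Real.exp (t x) - 1| ≤
            ((Real.exp U - 1) - (1 - Real.exp L)) / ((Real.exp U - 1) + (1 - Real.exp L))
              * (Real.exp (t x) - 1)
            + 2 * (Real.exp U - 1) * (1 - Real.exp L)
              / ((Real.exp U - 1) + (1 - Real.exp L)) := by
          rw [div_mul_eq_mul_div, ← add_div, le_div_iff₀ hBCpos]
          rcases abs_cases (Real.exp (t x) - 1) with ⟨h, -⟩ | ⟨h, -⟩ <;> rw [h]
          · nlinarith [mul_nonneg hC (sub_nonneg.mpr hX1)]
          · nlinarith [mul_nonneg hB (by linarith : (0:ℝ) ≤ (Real.exp (t x) - 1) + (1 - Real.exp L))]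
        have hmul := mul_le_mul_of_nonneg_right habs (hρ₂pos x).le
        calc |ρ₁ x - ρ₂ x| = |Real.exp (t x) - 1| * ρ₂ x := by
              rw [hρrel x, show Real.exp (t x) * ρ₂ x - ρ₂ x
                = (Real.exp (t x) - 1) * ρ₂ x from by ring, abs_mul, abs_of_pos (hρ₂pos x)]
          _ ≤ (((Real.exp U - 1) - (1 - Real.exp L)) / ((Real.exp U - 1) + (1 - Real.exp L))
                * (Real.exp (t x) - 1)
              + 2 * (Real.exp U - 1) * (1 - Real.exp L)
                / ((Real.exp U - 1) + (1 - Real.exp L))) * ρ₂ x := hmul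
          _ = _ := by rw [hρrel x]; ring
      have hint1 : Integrable (fun x => ((Real.exp U - 1) - (1 - Real.exp L))
          / ((Real.exp U - 1) + (1 - Real.exp L)) * (ρ₁ x - ρ₂ x)) := by
        exact (hρ₁int.sub hρ₂int).const_mul _
      have hint2 : Integrable (fun x => 2 * (Real.exp U - 1) * (1 - Real.exp L)
          / ((Real.exp U - 1) + (1 - Real.exp L)) * ρ₂ x) := by
        exact hρ₂int.const_mul _
      have hintsum : Integrable (fun x => ((Real.exp U - 1) - (1 - Real.exp L))
          / ((Real.exp U - 1) + (1 - Real.exp L)) * (ρ₁ x - ρ₂ x)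
          + 2 * (Real.exp U - 1) * (1 - Real.exp L)
          / ((Real.exp U - 1) + (1 - Real.exp L)) * ρ₂ x) := by
        exact hint1.add hint2
      have habsint : Integrable (fun x => |ρ₁ x - ρ₂ x|) := by
        exact (hρ₁int.sub hρ₂int).abs
      have h2 := integral_mono habsint hintsum hkey
      rw [integral_add hint1 hint2, integral_const_mul, integral_const_mul,
        integral_sub hρ₁int hρ₂int, hρ₁mass, hρ₂mass, ← hsdef] at h2
      simp only [sub_self, mul_zero, mul_one, zero_add] at h2
      -- h2 : s ≤ 2BC/(B+C)
      have h7 := lemC L U hLle hUge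
      have hUL : U - L = 2 * (ε * s) := by rw [hUdef, hLdef]; ring
      rw [hUL] at h7
      have h8 : 2 * (Real.exp U - 1) * (1 - Real.exp L)
          / ((Real.exp U - 1) + (1 - Real.exp L)) ≤ ε * s := by
        rw [div_le_iff₀ hBCpos]
        nlinarith [h7]
      have h9 : s ≤ ε * s := le_trans h2 h8
      have hε1 : ε < 1 := hsmall
      nlinarith [h9, hs0, hε1]
  -- conclusion
  have hCWs : CW * s ≤ 0 := by
    have h0 : (κ * β) * (CW * s) = 0 := by
      calc (κ * β) * (CW * s) = (κ * β * CW) * s := by ring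
        _ = ε * s := by rw [hεdef]
        _ = 0 := hεs
    have h1 : CW * s = 0 := by
      rcases mul_eq_zero.mp h0 with h | h
      · exact absurd h (ne_of_gt (mul_pos hκ hβ))
      · exact h
    linarith
  have hG : ∀ x, G₁ x = G₂ x := by
    intro x
    have h1 : |G₁ x - G₂ x| ≤ 0 := le_trans (hGdiff x) hCWs
    have h2 : G₁ x - G₂ x = 0 := abs_eq_zero.mp (le_antisymm h1 (abs_nonneg _))
    linarith
  have hZeq : Z₁ = Z₂ := by
    rw [hZ₁, hZ₂]
    congr 1
    funext z
    rw [hG z.1]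
  funext z
  rw [heq₁ z, heq₂ z, hG z.1, hZeq]
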